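/- The optimal Steiner-flow cost function satisfies the edge-extension recurrence: H(v, S) ≤ H(u, S) + (max_{d ∈ S} x(d)) · e(v, u) for every edge {v, u} ∈ E. -/

import Mathlib

namespace OST

variable {V : Type} [DecidableEq V]

/-- A feasible flow for the outflow-constrained minimum flow problem. -/
structure Feasible (E : V → V → Prop) (s : V) (D : Set V) (x : V → ℝ)
    (f : V → V → ℝ) : Prop where
  nonneg : ∀ i j, 0 ≤ f i j
  support : ∀ i j, ¬ E i j → f i j = 0
  /-- at every non-source node, every outflow value is bounded by some inflow value
      (max outflow ≤ max inflow) -/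
  conserve : ∀ i, i ≠ s → ∀ j, ∃ k, f i j ≤ f k i
  /-- every destination receives inflow at least its demand -/
  demand : ∀ d ∈ D, ∃ i, x d ≤ f i d

/-- Total weighted cost of a flow. -/
noncomputable def cost [Fintype V] (e f : V → V → ℝ) : ℝ :=
  ∑ i, ∑ j, e i j * f i j

/-- The (undirected) flow-carrying edge relation. -/
def carry (f : V → V → ℝ) (a b : V) : Prop := 0 < f a b ∨ 0 < f b a

/-- Directed reachability inside a set of directed edges. -/
def reach (T : Set (V × V)) (a b : V) : Prop :=
  Relation.ReflTransGen (fun p q => (p, q) ∈ T) a b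

/-- `T` is a tree rooted at `v`, edges directed away from the root. -/
structure IsRootedTree (E : V → V → Prop) (v : V) (T : Set (V × V)) : Prop where
  edges : ∀ p ∈ T, E p.1 p.2
  parent_unique : ∀ u u' w, (u, w) ∈ T → (u', w) ∈ T → u = u'
  root_no_parent : ∀ u, (u, v) ∉ T
  reach_root : ∀ p ∈ T, reach T v p.1

/-- The rooted edge set `T` connects `v` to every node of `S`. -/
def Spans (T : Set (V × V)) (v : V) (S : Set V) : Prop := ∀ d ∈ S, reach T v d

/-- Maximum demand among destinations of `S` lying below node `w` in `T`
    (`0` if there are none, by convention of `sSup` on `ℝ`). -/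
noncomputable def maxBelow (T : Set (V × V)) (S : Set V) (x : V → ℝ) (w : V) : ℝ :=
  sSup (x '' {d ∈ S | reach T w d})

/-- Steiner-flow cost of a rooted tree: each edge is charged its weight times the
    maximum demand among destinations of `S` below it. -/
noncomputable def treeCost (e : V → V → ℝ) (x : V → ℝ) (S : Set V)
    (T : Finset (V × V)) : ℝ :=
  ∑ p ∈ T, e p.1 p.2 * maxBelow (↑T) S x p.2

/-- Minimum Steiner-flow cost from root `v` to destination set `S`. -/
noncomputable def delta (E : V → V → Prop) (e : V → V → ℝ) (x : V → ℝ)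
    (v : V) (S : Set V) : ℝ :=
  sInf {c | ∃ T : Finset (V × V),
    IsRootedTree E v ↑T ∧ Spans (↑T) v S ∧ c = treeCost e x S T}

/-- `l` lists the successive vertices of a walk starting at the given vertex. -/
def IsWalk (R : V → V → Prop) : V → List V → Prop
  | _, [] => True
  | a, b :: l => R a b ∧ IsWalk R b l

/-- Total edge weight of a walk. -/
noncomputable def walkCost (e : V → V → ℝ) : V → List V → ℝ
  | _, [] => 0
  | a, b :: l => e a b + walkCost e b l

/-- Weighted shortest-path distance. -/
noncomputable def dist (E : V → V → Prop) (e : V → V → ℝ) (a b : V) : ℝ :=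
  sInf {c | ∃ l : List V, IsWalk E a l ∧
    (a :: l).getLast (List.cons_ne_nil a l) = b ∧ c = walkCost e a l}

/-- Hop distance in a directed relation. -/
noncomputable def hopDist (R : V → V → Prop) (a b : V) : ℕ :=
  sInf {n | ∃ l : List V, IsWalk R a l ∧
    (a :: l).getLast (List.cons_ne_nil a l) = b ∧ l.length = n}

/-- A feasible flow supported on the rooted tree `T`. -/
structure TreeFeasible (T : Set (V × V)) (D : Set V) (x : V → ℝ)
    (f : V → V → ℝ) : Prop where
  nonneg : ∀ i j, 0 ≤ f i j
  support : ∀ i j, (i, j) ∉ T → f i j = 0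
  /-- flow is nonincreasing away from the root -/
  mono : ∀ u w z, (u, w) ∈ T → (w, z) ∈ T → f w z ≤ f u w
  /-- each destination's parent edge carries at least its demand -/
  demand : ∀ d ∈ D, ∀ u, (u, d) ∈ T → x d ≤ f u d


lemma reach_mono {T T' : Set (V × V)} (h : T ⊆ T') {a b : V} (hr : reach T a b) :
    reach T' a b :=
  Relation.ReflTransGen.mono (fun _ _ hpq => h hpq) a b hr

lemma reach_split {T T₀ : Set (V × V)} {v : V}
    (h : ∀ p ∈ T, p.2 ≠ v → p ∈ T₀) :
    ∀ a d, reach T a d → reach T₀ a d ∨ reach T₀ v d := by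
  intro a d hr
  induction hr using Relation.ReflTransGen.head_induction_on with
  | refl => exact Or.inl .refl
  | head hab _ ih =>
    rcases ih with ih | ih
    · rename_i a' b' _
      by_cases hb : b' = v
      · subst hb; exact Or.inr ih
      · exact Or.inl (ih.head (h _ hab hb))
    · exact Or.inr ih

lemma reach_back {T₀ : Set (V × V)} {v u : V}
    (hv : ∀ a, (a, v) ∉ T₀) :
    ∀ w d, w ≠ v → reach (insert (v, u) T₀) w d → reach T₀ w d := by
  intro w d hw hr
  induction hr using Relation.ReflTransGen.head_induction_on with
  | refl => exact .refl
  | head hab _ ih =>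
    rename_i a' b' _
    rcases hab with hab | hab
    · exact absurd (congrArg Prod.fst hab) hw
    · have hb : b' ≠ v := fun h => hv a' (h ▸ hab)
      exact (ih hb).head hab

lemma maxBelow_nonneg {T : Set (V × V)} {S : Set V} {x : V → ℝ}
    (hxS : ∀ d ∈ S, 0 < x d) (w : V) : 0 ≤ maxBelow T S x w :=
  Real.sSup_nonneg (by rintro y ⟨d, ⟨hdS, _⟩, rfl⟩; exact (hxS d hdS).le)

lemma sSup_sub_le {s t : Set ℝ} (hb : BddAbove t) (h : s ⊆ t)
    (ht : ∀ y ∈ t, 0 ≤ y) : sSup s ≤ sSup t := by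
  rcases s.eq_empty_or_nonempty with rfl | hs
  · rw [Real.sSup_empty]
    exact Real.sSup_nonneg ht
  · exact csSup_le_csSup hb hs h

lemma treeCost_nonneg {E : V → V → Prop} {e : V → V → ℝ}
    (hepos : ∀ i j, E i j → 0 < e i j) {x : V → ℝ} {S : Set V}
    (hxS : ∀ d ∈ S, 0 < x d) {w : V} {T : Finset (V × V)}
    (hT : IsRootedTree E w ↑T) : 0 ≤ treeCost e x S T :=
  Finset.sum_nonneg fun p hp =>
    mul_nonneg (hepos _ _ (hT.edges p (by exact_mod_cast hp))).le
      (maxBelow_nonneg hxS _)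

/-- Key construction: attach the edge `(v,u)` to a tree rooted at `u`
(removing all old edges into `v`). -/
lemma key (E : V → V → Prop) (e : V → V → ℝ) (hepos : ∀ i j, E i j → 0 < e i j)
    (x : V → ℝ) (S : Set V) (hxS : ∀ d ∈ S, 0 < x d)
    (v u : V) (hvu : E v u) (hne : v ≠ u)
    (T : Finset (V × V)) (hT : IsRootedTree E u ↑T) (hSp : Spans ↑T u S) :
    ∃ T' : Finset (V × V), IsRootedTree E v ↑T' ∧ Spans ↑T' v S ∧
      treeCost e x S T' ≤ treeCost e x S T + sSup (x '' S) * e v u := by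
  classical
  -- S is finite, so x '' S is bounded above
  have hSfin : S.Finite := by
    apply Set.Finite.subset ((↑(T.image Prod.snd) : Set V).toFinite.insert u)
    intro d hd
    rcases (hSp d hd).cases_tail with h | ⟨c, _, hc⟩
    · exact Or.inl h
    · right
      simp only [Finset.coe_image, Set.mem_image]
      exact ⟨(c, d), hc, rfl⟩
  have hbdd : BddAbove (x '' S) := (hSfin.image x).bddAbove
  have hxim : ∀ y ∈ x '' S, 0 ≤ y := by
    rintro y ⟨d, hd, rfl⟩; exact (hxS d hd).le
  set T₀ : Finset (V × V) := T.filter (fun p => p.2 ≠ v) with hT₀def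
  have hT₀sub : ∀ p ∈ T₀, p ∈ T := fun p hp => (Finset.mem_filter.mp hp).1
  have hT₀v : ∀ a, (a, v) ∉ (↑T₀ : Set (V × V)) := by
    intro a ha
    exact (Finset.mem_filter.mp ha).2 rfl
  have hsplit : ∀ a ∈ (↑T : Set (V × V)), a.2 ≠ v → a ∈ (↑T₀ : Set (V × V)) := by
    intro a ha hav
    exact Finset.mem_filter.mpr ⟨ha, hav⟩
  have hvuT : (v, u) ∉ T₀ := by
    intro h
    exact hT.root_no_parent v (hT₀sub _ h)
  have hcoe : (↑(insert (v, u) T₀) : Set (V × V)) = insert (v, u) (↑T₀ : Set (V × V)) :=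
    Finset.coe_insert _ _
  refine ⟨insert (v, u) T₀, ?_, ?_, ?_⟩
  case _ =>
    rw [hcoe]
    constructor
    · rintro p hp
      rcases hp with hp | hp
      · subst hp; exact hvu
      · exact hT.edges p (hT₀sub _ hp)
    · rintro a a' w ha ha'
      rcases ha with ha | ha <;> rcases ha' with ha' | ha'
      · rw [Prod.mk.injEq] at ha ha'
        rw [ha.1, ha'.1]
      · exfalso
        rw [Prod.mk.injEq] at ha
        have : ((a', u) : V × V) ∈ (↑T : Set (V × V)) := by
          have := hT₀sub _ ha'
          rw [ha.2] at this
          exact this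
        exact hT.root_no_parent a' this
      · exfalso
        rw [Prod.mk.injEq] at ha'
        have : ((a, u) : V × V) ∈ (↑T : Set (V × V)) := by
          have := hT₀sub _ ha
          rw [ha'.2] at this
          exact this
        exact hT.root_no_parent a this
      · exact hT.parent_unique a a' w (hT₀sub _ ha) (hT₀sub _ ha')
    · intro a ha
      rcases ha with ha | ha
      · rw [Prod.mk.injEq] at ha
        exact hne ha.2
      · exact hT₀v a ha
    · intro p hp
      have hstep : reach (insert ((v, u) : V × V) ↑T₀) v u :=
        Relation.ReflTransGen.single (Or.inl rfl)
      rcases hp with hp | hp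
      · subst hp; exact .refl
      · have := hT.reach_root p (hT₀sub _ hp)
        rcases reach_split hsplit u p.1 this with h | h
        · exact hstep.trans (reach_mono (Set.subset_insert _ _) h)
        · exact reach_mono (Set.subset_insert _ _) h
  case _ =>
    rw [hcoe]
    intro d hd
    have hstep : reach (insert ((v, u) : V × V) ↑T₀) v u :=
      Relation.ReflTransGen.single (Or.inl rfl)
    rcases reach_split hsplit u d (hSp d hd) with h | h
    · exact hstep.trans (reach_mono (Set.subset_insert _ _) h)
    · exact reach_mono (Set.subset_insert _ _) h
  case _ =>
    rw [treeCost, Finset.sum_insert hvuT]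
    have hnew : e v u * maxBelow (↑(insert (v, u) T₀)) S x u ≤ sSup (x '' S) * e v u := by
      rw [mul_comm]
      apply mul_le_mul_of_nonneg_right _ (hepos v u hvu).le
      apply sSup_sub_le hbdd _ hxim
      rintro y ⟨d, ⟨hdS, _⟩, rfl⟩
      exact ⟨d, hdS, rfl⟩
    have hold : ∑ p ∈ T₀, e p.1 p.2 * maxBelow (↑(insert (v, u) T₀)) S x p.2
        ≤ treeCost e x S T := by
      apply le_trans (Finset.sum_le_sum (g := fun p => e p.1 p.2 * maxBelow (↑T) S x p.2) ?_)
      · apply Finset.sum_le_sum_of_subset_of_nonneg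
        · intro p hp; exact hT₀sub _ hp
        · intro p hp _
          exact mul_nonneg (hepos _ _ (hT.edges p hp)).le (maxBelow_nonneg hxS _)
      · intro p hp
        apply mul_le_mul_of_nonneg_left _ (hepos _ _ (hT.edges p (hT₀sub _ hp))).le
        apply sSup_sub_le
        · apply BddAbove.mono _ hbdd
          rintro y ⟨d, ⟨hdS, _⟩, rfl⟩; exact ⟨d, hdS, rfl⟩
        · rintro y ⟨d, ⟨hdS, hrd⟩, rfl⟩
          refine ⟨d, ⟨hdS, ?_⟩, rfl⟩
          have hp2v : p.2 ≠ v := (Finset.mem_filter.mp hp).2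
          apply reach_mono (T := (↑T₀ : Set (V × V))) (fun q hq => hT₀sub q hq)
          apply reach_back hT₀v p.2 d hp2v
          rw [hcoe] at hrd
          exact hrd
        · rintro y ⟨d, ⟨hdS, _⟩, rfl⟩; exact (hxS d hdS).le
    linarith

/-- the optimal Steiner-flow cost satisfies the edge-extension
recurrence `H(v,S) ≤ H(u,S) + (max_{d∈S} x d) · e(v,u)` for every edge `{v,u}`. -/
theorem stmt8 (E : V → V → Prop) (hE : ∀ a b, E a b → E b a)
    (hconn : ∀ a b : V, Relation.ReflTransGen E a b)
    (e : V → V → ℝ) (hepos : ∀ i j, E i j → 0 < e i j)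
    (D : Set V) (x : V → ℝ) (hx : ∀ d ∈ D, 0 < x d)
    (S : Set V) (hSD : S ⊆ D) (hS : S.Nonempty)
    (v u : V) (hvu : E v u) :
    delta E e x v S ≤ delta E e x u S + sSup (x '' S) * e v u := by
  classical
  have hxS : ∀ d ∈ S, 0 < x d := fun d hd => hx d (hSD hd)
  have hM0 : 0 ≤ sSup (x '' S) :=
    Real.sSup_nonneg (by rintro y ⟨d, hd, rfl⟩; exact (hxS d hd).le)
  have hMe : 0 ≤ sSup (x '' S) * e v u := mul_nonneg hM0 (hepos v u hvu).le
  by_cases hne : v = u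
  · subst hne
    exact le_add_of_nonneg_right hMe
  set Au := {c | ∃ T : Finset (V × V),
    IsRootedTree E u ↑T ∧ Spans (↑T) u S ∧ c = treeCost e x S T} with hAu
  set Av := {c | ∃ T : Finset (V × V),
    IsRootedTree E v ↑T ∧ Spans (↑T) v S ∧ c = treeCost e x S T} with hAv
  have hAvlb : ∀ c ∈ Av, 0 ≤ c := by
    rintro c ⟨T, hT, _, rfl⟩
    exact treeCost_nonneg hepos hxS hT
  have hAulb : ∀ c ∈ Au, 0 ≤ c := by
    rintro c ⟨T, hT, _, rfl⟩
    exact treeCost_nonneg hepos hxS hT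
  rcases Au.eq_empty_or_nonempty with hAuE | hAuN
  · -- then Av is empty as well
    have hAvE : Av = ∅ := by
      rw [Set.eq_empty_iff_forall_notMem]
      rintro c ⟨T, hT, hSp, rfl⟩
      obtain ⟨T', hT', hSp', _⟩ :=
        key E e hepos x S hxS u v (hE v u hvu) (Ne.symm hne) T hT hSp
      rw [Set.eq_empty_iff_forall_notMem] at hAuE
      exact hAuE (treeCost e x S T') ⟨T', hT', hSp', rfl⟩
    show sInf Av ≤ sInf Au + sSup (x '' S) * e v u
    rw [hAvE, hAuE, Real.sInf_empty]
    simpa using hMe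
  · have hmain : ∀ c ∈ Au, sInf Av ≤ c + sSup (x '' S) * e v u := by
      rintro c ⟨T, hT, hSp, rfl⟩
      obtain ⟨T', hT', hSp', hcost⟩ :=
        key E e hepos x S hxS v u hvu hne T hT hSp
      have h1 : sInf Av ≤ treeCost e x S T' :=
        csInf_le ⟨0, fun c hc => hAvlb c hc⟩ ⟨T', hT', hSp', rfl⟩
      linarith
    have : sInf Av - sSup (x '' S) * e v u ≤ sInf Au := by
      apply le_csInf hAuN
      intro c hc
      linarith [hmain c hc]
    show sInf Av ≤ sInf Au + sSup (x '' S) * e v u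
    linarith

end OST
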